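/- Let θ₀ ∈ ℝ with 0 < θ₀ < π, let K ∈ ℝ, let k be a symmetric positive-definite real 2×2 matrix, and let A, B be symmetric real 2×2 matrices. Set C = csc θ₀ • B − cot θ₀ • A. For M a 2×2 matrix write tr_k M = tr (k⁻¹ * M) and |M|²_k = tr (k⁻¹ * M * k⁻¹ * M), and write Å = A − (tr_k A / 2) • k, B̊ = B − (tr_k B / 2) • k, and ⟨Å,B̊⟩_k = tr (k⁻¹ * Å * k⁻¹ * B̊). Then ∫_{θ₀ + π/2}^{3π/2} [ K − (1/2) * (tr_k A)² − (1/2) * (tr_k C)² + (1/2) * |A|²_k + (1/2) * |C|²_k + (tr_k (cos θ • A + sin θ • C))² − |cos θ • A + sin θ • C|²_k ] dθ = (π − θ₀) * K − (1/4) * cot θ₀ * ((tr_k A)² + (tr_k B)²) + (1/2) * csc θ₀ * (tr_k A) * (tr_k B) + (1/2) * cot θ₀ * (|Å|²_k + |B̊|²_k) − csc θ₀ * ⟨Å,B̊⟩_k. -/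

import Mathlib

open Matrix Real intervalIntegral

private lemma exp1' (k A B : Matrix (Fin 2) (Fin 2) ℝ) (x y : ℝ) :
    (k⁻¹ * (x • A + y • B)).trace = x * (k⁻¹ * A).trace + y * (k⁻¹ * B).trace := by
  simp [Matrix.mul_add, Matrix.mul_smul, Matrix.trace_add, Matrix.trace_smul, smul_eq_mul]

private lemma exp3' (k A B D E : Matrix (Fin 2) (Fin 2) ℝ) (x y z w : ℝ) :
    (k⁻¹ * (x • A + y • B) * k⁻¹ * (z • D + w • E)).trace =
      x * z * (k⁻¹ * A * k⁻¹ * D).trace + x * w * (k⁻¹ * A * k⁻¹ * E).trace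
        + y * z * (k⁻¹ * B * k⁻¹ * D).trace + y * w * (k⁻¹ * B * k⁻¹ * E).trace := by
  simp only [Matrix.mul_add, Matrix.add_mul, Matrix.mul_smul, Matrix.smul_mul,
    Matrix.trace_add, Matrix.trace_smul, smul_eq_mul, smul_smul]
  ring

private lemma exp2' (k A B : Matrix (Fin 2) (Fin 2) ℝ) (x y : ℝ) :
    (k⁻¹ * (x • A + y • B) * k⁻¹ * (x • A + y • B)).trace =
      x^2 * (k⁻¹ * A * k⁻¹ * A).trace + 2 * x * y * (k⁻¹ * A * k⁻¹ * B).trace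
        + y^2 * (k⁻¹ * B * k⁻¹ * B).trace := by
  have h : (k⁻¹ * B * k⁻¹ * A).trace = (k⁻¹ * A * k⁻¹ * B).trace := by
    rw [show k⁻¹ * B * k⁻¹ * A = (k⁻¹ * B) * (k⁻¹ * A) by rw [mul_assoc],
        show k⁻¹ * A * k⁻¹ * B = (k⁻¹ * A) * (k⁻¹ * B) by rw [mul_assoc],
        Matrix.trace_mul_comm]
  rw [exp3', h]; ring

set_option maxHeartbeats 1600000 in
theorem stmt_11 (θ₀ : ℝ) (h0 : 0 < θ₀) (h1 : θ₀ < π) (K : ℝ)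
    (k : Matrix (Fin 2) (Fin 2) ℝ) (hk : k.PosDef) (hksym : k.IsSymm)
    (A B : Matrix (Fin 2) (Fin 2) ℝ) (hA : A.IsSymm) (hB : B.IsSymm)
    (C : Matrix (Fin 2) (Fin 2) ℝ)
    (hC : C = (Real.sin θ₀)⁻¹ • B - (Real.cos θ₀ / Real.sin θ₀) • A)
    (trk : Matrix (Fin 2) (Fin 2) ℝ → ℝ)
    (htrk : ∀ M, trk M = (k⁻¹ * M).trace)
    (nk : Matrix (Fin 2) (Fin 2) ℝ → ℝ)
    (hnk : ∀ M, nk M = (k⁻¹ * M * k⁻¹ * M).trace)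
    (A₀ B₀ : Matrix (Fin 2) (Fin 2) ℝ)
    (hA₀ : A₀ = A - (trk A / 2) • k)
    (hB₀ : B₀ = B - (trk B / 2) • k) :
    (∫ θ in (θ₀ + π / 2)..(3 * π / 2),
        (K - (1 / 2) * (trk A) ^ 2 - (1 / 2) * (trk C) ^ 2
          + (1 / 2) * nk A + (1 / 2) * nk C
          + (trk (Real.cos θ • A + Real.sin θ • C)) ^ 2
          - nk (Real.cos θ • A + Real.sin θ • C))) =
      (π - θ₀) * K
        - (1 / 4) * (Real.cos θ₀ / Real.sin θ₀) * ((trk A) ^ 2 + (trk B) ^ 2)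
        + (1 / 2) * (Real.sin θ₀)⁻¹ * (trk A) * (trk B)
        + (1 / 2) * (Real.cos θ₀ / Real.sin θ₀) * (nk A₀ + nk B₀)
        - (Real.sin θ₀)⁻¹ * (k⁻¹ * A₀ * k⁻¹ * B₀).trace := by
  have hs : Real.sin θ₀ ≠ 0 := (Real.sin_pos_of_pos_of_lt_pi h0 h1).ne'
  have hk1 : k⁻¹ * k = 1 := Matrix.nonsing_inv_mul k (isUnit_iff_ne_zero.mpr hk.det_pos.ne')
  set s := Real.sin θ₀ with hsdef
  set co := Real.cos θ₀ with hcodef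
  set a := trk A with ha
  set b := trk B with hb
  set nA := nk A with hnA
  set nB := nk B with hnB
  set m := (k⁻¹ * A * k⁻¹ * B).trace with hm
  -- rewrite C as a linear combination
  have hC' : C = (-(co / s)) • A + s⁻¹ • B := by rw [hC]; module
  -- basic trace values of C
  have hcC : trk C = s⁻¹ * b - (co / s) * a := by
    rw [htrk, hC', exp1', ← htrk, ← htrk, ← ha, ← hb]; ring
  have hmAB' : (k⁻¹ * B * k⁻¹ * A).trace = m := by
    rw [show k⁻¹ * B * k⁻¹ * A = (k⁻¹ * B) * (k⁻¹ * A) by rw [mul_assoc],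
        hm, show k⁻¹ * A * k⁻¹ * B = (k⁻¹ * A) * (k⁻¹ * B) by rw [mul_assoc],
        Matrix.trace_mul_comm]
  have hnC : nk C = (co / s)^2 * nA - 2 * (co / s) * s⁻¹ * m + s⁻¹^2 * nB := by
    rw [hnk, hC', exp2', ← hnk, ← hnk, ← hm, ← hnA, ← hnB]; ring
  have hmAC : (k⁻¹ * A * k⁻¹ * C).trace = s⁻¹ * m - (co / s) * nA := by
    rw [hC']
    simp only [Matrix.mul_add, Matrix.mul_smul, Matrix.trace_add, Matrix.trace_smul,
      smul_eq_mul]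
    rw [← hnk A, ← hnA, ← hm]
    ring
  set c := trk C with hcc
  set mAC := (k⁻¹ * A * k⁻¹ * C).trace with hmACd
  set nC := nk C with hnCd
  -- trace values involving k itself
  have htk : (k⁻¹ * k).trace = 2 := by rw [hk1]; simp
  have htAk : (k⁻¹ * A * k⁻¹ * k).trace = (k⁻¹ * A).trace := by
    rw [mul_assoc, hk1, mul_one]
  have htBk : (k⁻¹ * B * k⁻¹ * k).trace = (k⁻¹ * B).trace := by
    rw [mul_assoc, hk1, mul_one]
  have htkA : (k⁻¹ * k * k⁻¹ * A).trace = (k⁻¹ * A).trace := by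
    rw [hk1, Matrix.one_mul]
  have htkB : (k⁻¹ * k * k⁻¹ * B).trace = (k⁻¹ * B).trace := by
    rw [hk1, Matrix.one_mul]
  have htkk : (k⁻¹ * k * k⁻¹ * k).trace = 2 := by rw [hk1, Matrix.one_mul, htk]
  -- traceless parts
  have hA₀' : A₀ = (1:ℝ) • A + (-(a/2)) • k := by rw [hA₀]; module
  have hB₀' : B₀ = (1:ℝ) • B + (-(b/2)) • k := by rw [hB₀]; module
  have hnA0 : nk A₀ = nA - a^2/2 := by
    rw [hnk, hA₀', exp2', htAk, htkk, ← hnk, ← hnA, ← htrk, ← ha]; ring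
  have hnB0 : nk B₀ = nB - b^2/2 := by
    rw [hnk, hB₀', exp2', htBk, htkk, ← hnk, ← hnB, ← htrk, ← hb]; ring
  have hAB0 : (k⁻¹ * A₀ * k⁻¹ * B₀).trace = m - a*b/2 := by
    rw [hA₀', hB₀', exp3', htAk, htkB, htkk, ← hm, ← htrk, ← htrk, ← ha, ← hb]; ring
  -- rewrite the integrand
  have hinteg : ∀ θ : ℝ,
      (K - (1 / 2) * a ^ 2 - (1 / 2) * c ^ 2 + (1 / 2) * nA + (1 / 2) * nC
        + (trk (Real.cos θ • A + Real.sin θ • C)) ^ 2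
        - nk (Real.cos θ • A + Real.sin θ • C)) =
      (K - a^2/2 + c^2/2 + nA/2 - nC/2) + (a^2 - c^2 - nA + nC) * Real.cos θ ^ 2
        + (2 * (a * c - mAC)) * (Real.sin θ * Real.cos θ) := by
    intro θ
    have h1' : trk (Real.cos θ • A + Real.sin θ • C) = Real.cos θ * a + Real.sin θ * c := by
      rw [htrk, exp1', ← htrk, ← htrk, ← ha, ← hcc]
    have h2' : nk (Real.cos θ • A + Real.sin θ • C) =
        Real.cos θ^2 * nA + 2 * Real.cos θ * Real.sin θ * mAC + Real.sin θ^2 * nC := by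
      rw [hnk, exp2', ← hnk, ← hnk, ← hnA, ← hmACd, ← hnCd]
    rw [h1', h2']
    linear_combination (c^2 - nC - Real.cos θ * (2 * Real.sin θ) * 0) *
      (Real.sin_sq_add_cos_sq θ)
  rw [intervalIntegral.integral_congr (g := fun θ =>
      (K - a^2/2 + c^2/2 + nA/2 - nC/2) + (a^2 - c^2 - nA + nC) * Real.cos θ ^ 2
        + (2 * (a * c - mAC)) * (Real.sin θ * Real.cos θ))
      (fun θ _ => hinteg θ)]
  -- compute the integral via an antiderivative
  set P := K - a^2/2 + c^2/2 + nA/2 - nC/2 with hP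
  set Q := a^2 - c^2 - nA + nC with hQ
  set R := 2 * (a * c - mAC) with hR
  have hderiv : ∀ θ ∈ Set.uIcc (θ₀ + π/2) (3 * π / 2), HasDerivAt
      (fun θ => P * θ + Q * (θ/2 + Real.sin θ * Real.cos θ / 2) + R * (Real.sin θ^2 / 2))
      (P + Q * Real.cos θ ^ 2 + R * (Real.sin θ * Real.cos θ)) θ := by
    intro θ _
    have hd : HasDerivAt
        (fun θ => P * θ + Q * (θ/2 + Real.sin θ * Real.cos θ / 2) + R * (Real.sin θ^2 / 2))
        (P * 1 + Q * (1/2 + (Real.cos θ * Real.cos θ + Real.sin θ * (-Real.sin θ)) / 2)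
          + R * (2 * Real.sin θ ^ 1 * Real.cos θ / 2)) θ := by
      exact (((hasDerivAt_id θ).const_mul P).add
        ((((hasDerivAt_id θ).div_const 2).add
          (((Real.hasDerivAt_sin θ).mul (Real.hasDerivAt_cos θ)).div_const 2)).const_mul Q)).add
        ((((Real.hasDerivAt_sin θ).pow 2).div_const 2).const_mul R)
    have heq : P + Q * Real.cos θ ^ 2 + R * (Real.sin θ * Real.cos θ)
        = P * 1 + Q * (1/2 + (Real.cos θ * Real.cos θ + Real.sin θ * (-Real.sin θ)) / 2)
          + R * (2 * Real.sin θ ^ 1 * Real.cos θ / 2) := by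
      linear_combination (Q/2) * Real.sin_sq_add_cos_sq θ
    rw [heq]; exact hd
  have hcont : IntervalIntegrable (fun θ =>
      P + Q * Real.cos θ ^ 2 + R * (Real.sin θ * Real.cos θ)) MeasureTheory.volume
      (θ₀ + π/2) (3 * π / 2) := by
    apply Continuous.intervalIntegrable; fun_prop
  rw [intervalIntegral.integral_eq_sub_of_hasDerivAt hderiv hcont]
  -- evaluate trig at the endpoints
  have e1 : Real.sin (3 * π / 2) = -1 := by
    rw [show (3:ℝ) * π / 2 = π + π/2 by ring, Real.sin_add]; simp
  have e2 : Real.cos (3 * π / 2) = 0 := by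
    rw [show (3:ℝ) * π / 2 = π + π/2 by ring, Real.cos_add]; simp
  have e3 : Real.sin (θ₀ + π/2) = co := by rw [Real.sin_add_pi_div_two]
  have e4 : Real.cos (θ₀ + π/2) = -s := by rw [Real.cos_add_pi_div_two]
  rw [e1, e2, e3, e4]
  -- final algebra
  rw [hnA0, hnB0, hAB0]
  simp only [hP, hQ, hR, hcC, hnC, hmAC, ← hcc]
  have hsc : s^2 + co^2 = 1 := by
    rw [hsdef, hcodef]; exact Real.sin_sq_add_cos_sq θ₀
  field_simp
  linear_combination (8 * s * co * (a^2 - nA)) * hsc
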